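/- Let [H,G] be a Boolean interval of finite groups with dual Euler totient φ̂(H,G) = ∑_{K ∈ [H,G]} μ(H,K)·|G:K| nonzero. Then there exists an irreducible complex representation V of G such that the pointwise stabilizer of the H-fixed subspace V^H is exactly H. -/

import Mathlib

/-- The fixed-point subspace `V^H` of a representation. -/
def Representation.fixedBy {G V : Type*} [Group G] [AddCommGroup V] [Module ℂ V]
    (ρ : Representation ℂ G V) (H : Subgroup G) : Submodule ℂ V where
  carrier := {v : V | ∀ h ∈ H, ρ h v = v}
  zero_mem' := by intro h _; simp
  add_mem' := by
    intro a b ha hb h hh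
    simp [map_add, ha h hh, hb h hh]
  smul_mem' := by
    intro c a ha h hh
    simp [map_smul, ha h hh]

/-- The pointwise stabilizer `G_{(X)}` of a set of vectors. -/
def Representation.pointwiseStabilizer {G V : Type*} [Group G] [AddCommGroup V] [Module ℂ V]
    (ρ : Representation ℂ G V) (X : Set V) : Subgroup G where
  carrier := {g : G | ∀ x ∈ X, ρ g x = x}
  one_mem' := by intro x _; simp
  mul_mem' := by
    intro a b ha hb x hx
    simp [map_mul, Module.End.mul_apply, hb x hx, ha x hx]
  inv_mem' := by
    intro a ha x hx
    have h1 : ρ a⁻¹ (ρ a x) = x := by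
      rw [← Module.End.mul_apply, ← map_mul, inv_mul_cancel, map_one, Module.End.one_apply]
    calc ρ a⁻¹ x = ρ a⁻¹ (ρ a x) := by rw [ha x hx]
    _ = x := h1

namespace DualOre

open Module CategoryTheory

variable {G : Type} [Group G]

theorem mem_fixedBy {V : Type} [AddCommGroup V] [Module ℂ V] (ρ : Representation ℂ G V)
    (K : Subgroup G) (v : V) : v ∈ ρ.fixedBy K ↔ ∀ h ∈ K, ρ h v = v := Iff.rfl

theorem mem_pointwiseStabilizer {V : Type} [AddCommGroup V] [Module ℂ V]
    (ρ : Representation ℂ G V) (X : Set V) (g : G) :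
    g ∈ ρ.pointwiseStabilizer X ↔ ∀ x ∈ X, ρ g x = x := Iff.rfl

theorem fixedBy_antitone {V : Type} [AddCommGroup V] [Module ℂ V] (ρ : Representation ℂ G V)
    {K K' : Subgroup G} (h : K ≤ K') : ρ.fixedBy K' ≤ ρ.fixedBy K :=
  fun _ hv k hk => hv k (h hk)

theorem le_pointwiseStabilizer {V : Type} [AddCommGroup V] [Module ℂ V]
    (ρ : Representation ℂ G V) (H : Subgroup G) :
    H ≤ ρ.pointwiseStabilizer (ρ.fixedBy H : Set V) :=
  fun h hh => fun _ hx => hx h hh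

/-- Restriction of a representation to an invariant subspace. -/
def subRep {V : Type} [AddCommGroup V] [Module ℂ V] (ρ : Representation ℂ G V)
    (p : Submodule ℂ V) (hp : ∀ g : G, ∀ v ∈ p, ρ g v ∈ p) : Representation ℂ G p where
  toFun g := LinearMap.restrict (ρ g) (fun v hv => hp g v hv)
  map_one' := by
    refine LinearMap.ext fun v => Subtype.ext ?_
    simp [LinearMap.restrict_apply]
  map_mul' g h := by
    refine LinearMap.ext fun v => Subtype.ext ?_
    simp [LinearMap.restrict_apply]

theorem subRep_apply {V : Type} [AddCommGroup V] [Module ℂ V] (ρ : Representation ℂ G V)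
    (p : Submodule ℂ V) (hp : ∀ g : G, ∀ v ∈ p, ρ g v ∈ p) (g : G) (v : p) :
    (subRep ρ p hp g v : V) = ρ g (v : V) := rfl

/-- Maschke: an invariant subspace has an invariant complement. -/
theorem exists_invariant_isCompl [Fintype G] {V : Type} [AddCommGroup V] [Module ℂ V]
    (ρ : Representation ℂ G V) (p : Submodule ℂ V) (hp : ∀ g : G, ∀ v ∈ p, ρ g v ∈ p) :
    ∃ q : Submodule ℂ V, (∀ g : G, ∀ v ∈ q, ρ g v ∈ q) ∧ IsCompl p q := by
  obtain ⟨q0, hq0⟩ := Submodule.exists_isCompl p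
  set π0 : V →ₗ[ℂ] V := p.subtype ∘ₗ (p.projectionOnto q0 hq0) with hπ0
  have hπ0mem : ∀ v, π0 v ∈ p := fun v => (p.projectionOnto q0 hq0 v).2
  have hπ0id : ∀ v ∈ p, π0 v = v := fun v hv => by
    have := Submodule.linearProjOfIsCompl_apply_left hq0 ⟨v, hv⟩
    simp only [hπ0, LinearMap.comp_apply]
    rw [this]
    rfl
  have hρρ : ∀ (g : G) (v : V), ρ g (ρ g⁻¹ v) = v := fun g v => by
    rw [← Module.End.mul_apply, ← map_mul, mul_inv_cancel, map_one, Module.End.one_apply]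
  set c : ℂ := (Fintype.card G : ℂ)⁻¹ with hc
  set π : V →ₗ[ℂ] V := c • ∑ g : G, (ρ g) ∘ₗ π0 ∘ₗ (ρ g⁻¹) with hπ
  have hπapply : ∀ v, π v = c • ∑ g : G, ρ g (π0 (ρ g⁻¹ v)) := fun v => by
    simp [hπ, LinearMap.sum_apply]
  have hπmem : ∀ v, π v ∈ p := fun v => by
    rw [hπapply]
    exact Submodule.smul_mem _ _ (Submodule.sum_mem _ fun g _ => hp g _ (hπ0mem _))
  have hcard : (Fintype.card G : ℂ) ≠ 0 := Nat.cast_ne_zero.mpr Fintype.card_ne_zero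
  have hπid : ∀ v ∈ p, π v = v := fun v hv => by
    rw [hπapply]
    have h1 : ∀ g : G, ρ g (π0 (ρ g⁻¹ v)) = v := fun g => by
      rw [hπ0id _ (hp g⁻¹ v hv), hρρ]
    rw [Finset.sum_congr rfl (fun g _ => h1 g), Finset.sum_const, Finset.card_univ]
    rw [← Nat.cast_smul_eq_nsmul ℂ, smul_smul, hc, inv_mul_cancel₀ hcard, one_smul]
  have hπcomm : ∀ (h : G) (v : V), π (ρ h v) = ρ h (π v) := fun h v => by
    rw [hπapply, hπapply, map_smul]
    congr 1
    rw [map_sum]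
    refine Fintype.sum_equiv (Equiv.mulLeft h⁻¹) _ _ fun g => ?_
    simp only [Equiv.coe_mulLeft]
    have e2 : ρ (h⁻¹ * g)⁻¹ v = ρ g⁻¹ (ρ h v) := by
      rw [← Module.End.mul_apply, ← map_mul]
      congr 1
      group
    rw [e2, ← Module.End.mul_apply (ρ h), ← map_mul]
    have e3 : h * (h⁻¹ * g) = g := by group
    rw [e3]
  refine ⟨LinearMap.ker π, fun g v hv => ?_, ?_, ?_⟩
  · rw [LinearMap.mem_ker] at hv ⊢
    rw [hπcomm, hv, map_zero]
  · rw [Submodule.disjoint_def]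
    intro v hvp hvk
    rw [LinearMap.mem_ker] at hvk
    rw [← hπid v hvp, hvk]
  · rw [codisjoint_iff]
    rw [Submodule.eq_top_iff']
    intro v
    refine Submodule.mem_sup.mpr ⟨π v, hπmem v, v - π v, ?_, by abel⟩
    rw [LinearMap.mem_ker, map_sub, hπid _ (hπmem v), sub_self]

/-- Fixed points of a subrepresentation. -/
noncomputable def fixedBySubRepEquiv {V : Type} [AddCommGroup V] [Module ℂ V]
    (ρ : Representation ℂ G V) (p : Submodule ℂ V) (hp : ∀ g : G, ∀ v ∈ p, ρ g v ∈ p)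
    (K : Subgroup G) : ((subRep ρ p hp).fixedBy K) ≃ₗ[ℂ] ↥(ρ.fixedBy K ⊓ p) where
  toFun x := ⟨((x : p) : V), ⟨fun h hh => congrArg Subtype.val (x.2 h hh), (x : p).2⟩⟩
  map_add' _ _ := rfl
  map_smul' _ _ := rfl
  invFun v := ⟨⟨(v : V), v.2.2⟩, fun h hh => Subtype.ext (v.2.1 h hh)⟩
  left_inv _ := rfl
  right_inv _ := rfl

theorem finrank_fixedBy_split {V : Type} [AddCommGroup V] [Module ℂ V] [FiniteDimensional ℂ V]
    (ρ : Representation ℂ G V) (p q : Submodule ℂ V)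
    (hp : ∀ g : G, ∀ v ∈ p, ρ g v ∈ p) (hq : ∀ g : G, ∀ v ∈ q, ρ g v ∈ q)
    (hpq : IsCompl p q) (K : Subgroup G) :
    finrank ℂ (ρ.fixedBy K) =
      finrank ℂ ((subRep ρ p hp).fixedBy K) + finrank ℂ ((subRep ρ q hq).fixedBy K) := by
  rw [(fixedBySubRepEquiv ρ p hp K).finrank_eq, (fixedBySubRepEquiv ρ q hq K).finrank_eq]
  have hsup : ρ.fixedBy K = (ρ.fixedBy K ⊓ p) ⊔ (ρ.fixedBy K ⊓ q) := by
    refine le_antisymm ?_ (sup_le inf_le_left inf_le_left)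
    intro v hv
    have hvpq : v ∈ p ⊔ q := by rw [hpq.sup_eq_top]; trivial
    obtain ⟨a, haP, b, hbQ, hab⟩ := Submodule.mem_sup.mp hvpq
    have key : ∀ h ∈ K, ρ h a = a ∧ ρ h b = b := by
      intro h hh
      have h1 : ρ h a + ρ h b = a + b := by
        rw [← map_add, hab, hv h hh]
      have hmem : ρ h a - a ∈ p := sub_mem (hp h a haP) haP
      have hmem' : ρ h a - a ∈ q := by
        have h2 : ρ h a - a = b - ρ h b := by
          rw [sub_eq_sub_iff_add_eq_add, h1]
          exact add_comm a b
        rw [h2]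
        exact sub_mem hbQ (hq h b hbQ)
      have h0 : ρ h a - a = 0 := Submodule.disjoint_def.mp hpq.disjoint _ hmem hmem'
      have ha' : ρ h a = a := by
        have := sub_eq_zero.mp h0
        exact this
      refine ⟨ha', ?_⟩
      rw [ha'] at h1
      exact add_left_cancel h1
    exact Submodule.mem_sup.mpr
      ⟨a, ⟨fun h hh => (key h hh).1, haP⟩, b, ⟨fun h hh => (key h hh).2, hbQ⟩, hab⟩
  have hdisj : (ρ.fixedBy K ⊓ p) ⊓ (ρ.fixedBy K ⊓ q) = ⊥ := by
    rw [eq_bot_iff]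
    intro v hv
    have hvp : v ∈ p := hv.1.2
    have hvq : v ∈ q := hv.2.2
    have : v = 0 := by
      have := Submodule.disjoint_def.mp hpq.disjoint v hvp hvq
      exact this
    simp [this]
  have hkey := Submodule.finrank_sup_add_finrank_inf_eq (ρ.fixedBy K ⊓ p) (ρ.fixedBy K ⊓ q)
  rw [hdisj, finrank_bot, add_zero] at hkey
  conv_lhs => rw [hsup]
  exact hkey

/-- The dimension of the `K`-fixed subspace of the regular representation is the index. -/
theorem finrank_fixedBy_regular [Fintype G] (K : Subgroup G) :
    finrank ℂ ((Representation.ofMulAction ℂ G G).fixedBy K) = K.index := by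
  classical
  set Q := Quotient (QuotientGroup.rightRel K) with hQ
  have hconst : ∀ f : MonoidAlgebra ℂ G, f ∈ (Representation.ofMulAction ℂ G G).fixedBy K →
      ∀ x y : G, (QuotientGroup.rightRel K) x y → f.coeff x = f.coeff y := by
    intro f hf x y hxy
    rw [QuotientGroup.rightRel_apply] at hxy
    -- y * x⁻¹ ∈ K, so y = (y * x⁻¹) • x
    have hfix := hf (y * x⁻¹) hxy
    have := congrArg (fun (u : MonoidAlgebra ℂ G) => u.coeff y) hfix
    rw [Representation.coeff_ofMulAction] at this
    have harg : (y * x⁻¹)⁻¹ • y = x := by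
      simp [smul_eq_mul]
    rw [harg] at this
    exact this
  let E : ((Representation.ofMulAction ℂ G G).fixedBy K) ≃ₗ[ℂ] (Q → ℂ) :=
    { toFun := fun f q => (f : MonoidAlgebra ℂ G).coeff q.out
      map_add' := fun f g => by funext q; rfl
      map_smul' := fun c f => by funext q; rfl
      invFun := fun g =>
        ⟨MonoidAlgebra.ofCoeff
            (Finsupp.equivFunOnFinite.symm (fun x => g (Quotient.mk (QuotientGroup.rightRel K) x))),
          by
            intro k hk
            refine MonoidAlgebra.ext (Finsupp.ext fun x => ?_)
            rw [Representation.coeff_ofMulAction]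
            simp only [MonoidAlgebra.coeff_ofCoeff, Finsupp.coe_equivFunOnFinite_symm]
            congr 1
            refine Quotient.sound (QuotientGroup.rightRel_apply.mpr ?_)
            have : x * (k⁻¹ • x)⁻¹ = k := by
              simp [smul_eq_mul]
            rw [this]
            exact hk⟩
      left_inv := fun f => by
        refine Subtype.ext (MonoidAlgebra.ext (Finsupp.ext fun x => ?_))
        simp only [MonoidAlgebra.coeff_ofCoeff, Finsupp.coe_equivFunOnFinite_symm]
        exact hconst f f.2 _ x (Quotient.mk_out x)
      right_inv := fun g => by
        funext q
        simp only [MonoidAlgebra.coeff_ofCoeff, Finsupp.coe_equivFunOnFinite_symm]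
        congr 1
        exact Quotient.out_eq q }
  rw [E.finrank_eq]
  have : Fintype Q := Fintype.ofFinite Q
  rw [Module.finrank_pi ℂ]
  rw [← Nat.card_eq_fintype_card]
  rw [Nat.card_congr (QuotientGroup.quotientRightRelEquivQuotientLeftRel K)]
  rfl

/-- An irreducible nonzero representation gives a simple `FDRep`. -/
theorem simple_of_irreducible {V : Type} [AddCommGroup V] [Module ℂ V] [FiniteDimensional ℂ V]
    (ρ : Representation ℂ G V) (hV : 0 < finrank ℂ V)
    (hirr : ∀ p : Submodule ℂ V, (∀ g : G, ∀ v ∈ p, ρ g v ∈ p) → p = ⊥ ∨ p = ⊤) :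
    CategoryTheory.Simple (FDRep.of ρ) := by
  constructor
  intro Y f hf
  constructor
  · intro hiso hf0
    obtain ⟨g, -, hg2⟩ := hiso.out
    rw [hf0, CategoryTheory.Limits.comp_zero] at hg2
    have hzero : ∀ v : V, v = 0 := by
      intro v
      have h2 := congrArg (fun φ : FDRep.of ρ ⟶ FDRep.of ρ => φ.hom.hom.hom v) hg2
      simpa using h2.symm
    obtain ⟨v, w, hvw⟩ := (finrank_pos_iff (R := ℂ)).mp hV |>.exists_pair_ne
    exact hvw (by rw [hzero v, hzero w])
  · intro hf0
    -- f.hom.hom.hom is injective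
    have hkerinv : ∀ g : G, ∀ v ∈ LinearMap.ker f.hom.hom.hom, Y.ρ g v ∈ LinearMap.ker f.hom.hom.hom := by
      intro g v hv
      rw [LinearMap.mem_ker] at hv ⊢
      have hcomm := congrArg (fun φ => φ v) (f.comm g)
      have h2 : f.hom.hom.hom (Y.ρ g v) = (FDRep.of ρ).ρ g (f.hom.hom.hom v) := hcomm
      exact h2.trans (by rw [hv, map_zero])
    have hinj : Function.Injective f.hom.hom.hom := by
      rw [← LinearMap.ker_eq_bot]
      by_contra hne
      set Z : FDRep ℂ G := FDRep.of (subRep Y.ρ (LinearMap.ker f.hom.hom.hom) hkerinv) with hZ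
      have hι : ∃ ι : Z ⟶ Y, ι.hom.hom.hom = (LinearMap.ker f.hom.hom.hom).subtype := by
        refine ⟨⟨FGModuleCat.ofHom (LinearMap.ker f.hom.hom.hom).subtype, fun g => ?_⟩, rfl⟩
        rfl
      obtain ⟨ι, hιhom⟩ := hι
      have hcomp : ι ≫ f = 0 := by
        ext v
        have : f.hom.hom.hom (ι.hom.hom.hom v) = 0 := by
          rw [hιhom]
          exact v.2
        exact this
      have hι0 : ι = 0 := by
        have := hf.right_cancellation ι 0 (by rw [hcomp, CategoryTheory.Limits.zero_comp])
        exact this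
      apply hne
      rw [Submodule.eq_bot_iff]
      intro v hv
      have : ι.hom.hom.hom ⟨v, hv⟩ = v := by rw [hιhom]; rfl
      rw [hι0] at this
      simpa using this.symm
    have hrnginv : ∀ g : G, ∀ w ∈ LinearMap.range f.hom.hom.hom, ρ g w ∈ LinearMap.range f.hom.hom.hom := by
      intro g w hw
      obtain ⟨u, hu⟩ := hw
      refine ⟨Y.ρ g u, ?_⟩
      have hcomm := congrArg (fun φ => φ u) (f.comm g)
      have : f.hom.hom.hom (Y.ρ g u) = (FDRep.of ρ).ρ g (f.hom.hom.hom u) := hcomm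
      rw [this, hu]
      rfl
    have hsurj : Function.Surjective f.hom.hom.hom := by
      rw [← LinearMap.range_eq_top]
      rcases hirr (LinearMap.range f.hom.hom.hom) hrnginv with h | h
      · exfalso
        apply hf0
        ext v
        have : f.hom.hom.hom v = 0 := by
          have := LinearMap.range_eq_bot.mp h
          rw [this]; rfl
        exact this
      · exact h
    set e := LinearEquiv.ofBijective f.hom.hom.hom ⟨hinj, hsurj⟩ with he
    have hg : ∃ g : FDRep.of ρ ⟶ Y, g.hom.hom.hom = e.symm.toLinearMap := by
      refine ⟨⟨FGModuleCat.ofHom e.symm.toLinearMap, fun σ => ?_⟩, rfl⟩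
      ext w
      apply hinj
      have h1 : f.hom.hom.hom (e.symm ((FDRep.of ρ).ρ σ w)) = (FDRep.of ρ).ρ σ w := e.apply_symm_apply _
      have hcomm := congrArg (fun φ => φ (e.symm w)) (f.comm σ)
      have h2 : f.hom.hom.hom (Y.ρ σ (e.symm w)) = (FDRep.of ρ).ρ σ (f.hom.hom.hom (e.symm w)) := hcomm
      have h3 : f.hom.hom.hom (e.symm w) = w := e.apply_symm_apply _
      show f.hom.hom.hom (e.symm (((FDRep.of ρ).ρ σ) w)) = f.hom.hom.hom ((Y.ρ σ) (e.symm w))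
      rw [h1, h2, h3]
    obtain ⟨g, hghom⟩ := hg
    refine ⟨⟨g, ?_, ?_⟩⟩
    · ext v
      show g.hom.hom.hom (f.hom.hom.hom v) = v
      rw [hghom]
      exact e.symm_apply_apply v
    · ext w
      show f.hom.hom.hom (g.hom.hom.hom w) = w
      rw [hghom]
      exact e.apply_symm_apply w

/-- Inclusion–exclusion cancellation. -/
theorem sum_cancel {n : ℕ} (f : Finset (Fin n) → ℤ) (A : Finset (Fin n)) (hA : A.Nonempty)
    (hf : ∀ S, f S = f (S ∪ A)) :
    ∑ S : Finset (Fin n), (-1 : ℤ) ^ S.card * f S = 0 := by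
  classical
  obtain ⟨a, ha⟩ := hA
  have key : ∀ S, a ∉ S → f (insert a S) = f S := by
    intro S hS
    rw [hf (insert a S), hf S]
    congr 1
    rw [Finset.insert_union]
    rw [Finset.insert_eq_self.mpr (Finset.mem_union_right S ha)]
  rw [← Finset.sum_filter_add_sum_filter_not Finset.univ (fun S => a ∈ S)]
  have hbij : ∑ S ∈ Finset.univ.filter (fun S => a ∈ S), (-1 : ℤ) ^ S.card * f S
      = ∑ S ∈ Finset.univ.filter (fun S => ¬ a ∈ S), (-1 : ℤ) ^ (insert a S).card * f (insert a S) := by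
    refine Finset.sum_bij' (fun S _ => S.erase a) (fun S _ => insert a S) ?_ ?_ ?_ ?_ ?_
    · intro S hS
      simp
    · intro S hS
      simp only [Finset.mem_filter, Finset.mem_univ, true_and] at hS ⊢
      exact Finset.mem_insert_self a S
    · intro S hS
      simp only [Finset.mem_filter, Finset.mem_univ, true_and] at hS
      exact Finset.insert_erase hS
    · intro S hS
      simp only [Finset.mem_filter, Finset.mem_univ, true_and] at hS
      exact Finset.erase_insert hS
    · intro S hS
      simp only [Finset.mem_filter, Finset.mem_univ, true_and] at hS
      rw [Finset.insert_erase hS]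
  rw [hbij]
  rw [← Finset.sum_add_distrib]
  refine Finset.sum_eq_zero fun S hS => ?_
  simp only [Finset.mem_filter, Finset.mem_univ, true_and] at hS
  rw [key S hS, Finset.card_insert_of_notMem hS, pow_succ]
  ring

section Translate

variable {H : Subgroup G} {n : ℕ}

/-- Finset version of a finite set. -/
noncomputable def sfin (T : Set (Fin n)) : Finset (Fin n) := T.toFinite.toFinset

theorem coe_sfin (T : Set (Fin n)) : (↑(sfin T) : Set (Fin n)) = T :=
  Set.Finite.coe_toFinset _

/-- Transport of a finset along the Boolean structure to a subgroup in the interval. -/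
noncomputable def jmap (e : (Set.Icc H (⊤ : Subgroup G)) ≃o Set (Fin n))
    (S : Finset (Fin n)) : Subgroup G :=
  ((e.symm (↑S : Set (Fin n)) : Set.Icc H (⊤ : Subgroup G)) : Subgroup G)

variable (e : (Set.Icc H (⊤ : Subgroup G)) ≃o Set (Fin n))

theorem jmap_mem (S : Finset (Fin n)) : jmap e S ∈ Set.Icc H (⊤ : Subgroup G) :=
  (e.symm (↑S : Set (Fin n))).2

theorem jmap_le_iff {S T : Finset (Fin n)} : jmap e S ≤ jmap e T ↔ S ⊆ T := by
  unfold jmap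
  rw [Subtype.coe_le_coe, OrderIso.le_iff_le]
  exact Finset.coe_subset

theorem jmap_sfin (K : Subgroup G) (hK : K ∈ Set.Icc H (⊤ : Subgroup G)) :
    jmap e (sfin ((e ⟨K, hK⟩ : Set (Fin n)))) = K := by
  unfold jmap
  rw [coe_sfin, OrderIso.symm_apply_apply]

theorem sfin_jmap (S : Finset (Fin n)) :
    sfin ((e ⟨jmap e S, jmap_mem e S⟩ : Set (Fin n))) = S := by
  have h2 : (⟨jmap e S, jmap_mem e S⟩ : Set.Icc H (⊤ : Subgroup G)) = e.symm (↑S : Set (Fin n)) :=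
    Subtype.ext rfl
  rw [h2, OrderIso.apply_symm_apply]
  refine Finset.ext fun a => ?_
  simp [sfin, Set.Finite.mem_toFinset]

theorem jmap_empty : jmap e (∅ : Finset (Fin n)) = H := by
  have h1 : H ∈ Set.Icc H (⊤ : Subgroup G) := ⟨le_refl H, le_top⟩
  refine le_antisymm ?_ (jmap_mem e ∅).1
  have h2 := (jmap_le_iff e (S := (∅ : Finset (Fin n)))
    (T := sfin ((e ⟨H, h1⟩ : Set (Fin n))))).mpr (Finset.empty_subset _)
  rwa [jmap_sfin e H h1] at h2

theorem jmap_inj {S T : Finset (Fin n)} (h : jmap e S = jmap e T) : S = T :=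
  subset_antisymm ((jmap_le_iff e).mp h.le) ((jmap_le_iff e).mp h.ge)

/-- Values of the Möbius function on a Boolean interval. -/
theorem mu_eq [Fintype G] (μ : Subgroup G → ℤ) (hμH : μ H = 1)
    (hμ : ∀ K : Subgroup G, H < K → ∑ᶠ L ∈ Set.Icc H K, μ L = 0)
    (S : Finset (Fin n)) : μ (jmap e S) = (-1 : ℤ) ^ S.card := by
  classical
  haveI : Finite (Subgroup G) :=
    Finite.of_injective (fun K : Subgroup G => (K : Set G)) SetLike.coe_injective
  induction S using Finset.strongInduction with
  | _ S ihS =>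
  rcases S.eq_empty_or_nonempty with rfl | hSne
  · rw [jmap_empty e, hμH]; simp
  · have hlt : H < jmap e S := by
      refine lt_of_le_of_ne (jmap_mem e S).1 ?_
      intro hEq
      have h3 : (∅ : Finset (Fin n)) = S := jmap_inj e (by rw [jmap_empty e, ← hEq])
      exact hSne.ne_empty h3.symm
    have h0 := hμ (jmap e S) hlt
    have hfin2 : (Set.Icc H (jmap e S)).Finite := Set.toFinite _
    rw [← hfin2.coe_toFinset, finsum_mem_coe_finset] at h0
    have hre : ∑ L ∈ hfin2.toFinset, μ L = ∑ T ∈ S.powerset, μ (jmap e T) := by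
      refine Finset.sum_bij'
        (fun L hL => sfin ((e ⟨L, ⟨(hfin2.mem_toFinset.mp hL).1, le_top⟩⟩ : Set (Fin n))))
        (fun T _ => jmap e T)
        (fun L hL => ?_) (fun T hT => ?_) (fun L hL => jmap_sfin e L _) (fun T hT => sfin_jmap e T)
        (fun L hL => (congrArg μ (jmap_sfin e L _)).symm)
      · rw [Finset.mem_powerset, ← Finset.coe_subset, coe_sfin]
        have hL2 := hfin2.mem_toFinset.mp hL
        have hle : (⟨L, ⟨hL2.1, le_top⟩⟩ : Set.Icc H (⊤ : Subgroup G))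
            ≤ ⟨jmap e S, jmap_mem e S⟩ := hL2.2
        have h4 := e.le_iff_le.mpr hle
        have h5 : (⟨jmap e S, jmap_mem e S⟩ : Set.Icc H (⊤ : Subgroup G))
            = e.symm (↑S : Set (Fin n)) := Subtype.ext rfl
        rw [h5, OrderIso.apply_symm_apply] at h4
        exact h4
      · rw [hfin2.mem_toFinset]
        exact ⟨(jmap_mem e T).1, (jmap_le_iff e).mpr (Finset.mem_powerset.mp hT)⟩
    rw [hre, ← Finset.sum_erase_add _ _ (Finset.mem_powerset_self S)] at h0
    have hrest : ∑ T ∈ S.powerset.erase S, μ (jmap e T)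
        = ∑ T ∈ S.powerset.erase S, (-1 : ℤ) ^ T.card := by
      refine Finset.sum_congr rfl fun T hT => ?_
      rw [Finset.mem_erase, Finset.mem_powerset] at hT
      exact ihS T (lt_of_le_of_ne hT.2 hT.1)
    rw [hrest] at h0
    have hall : ∑ T ∈ S.powerset, (-1 : ℤ) ^ T.card = 0 :=
      Finset.sum_powerset_neg_one_pow_card_of_nonempty hSne
    rw [← Finset.sum_erase_add _ _ (Finset.mem_powerset_self S)] at hall
    omega

end Translate

/-- Key induction: if no simple representation works, the alternating sum of fixed-space
dimensions vanishes for every finite-dimensional representation. -/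
theorem sum_fixedBy_eq_zero [Fintype G] (H : Subgroup G) {n : ℕ}
    (e : (Set.Icc H (⊤ : Subgroup G)) ≃o Set (Fin n))
    (hcon : ∀ W : FDRep ℂ G, CategoryTheory.Simple W →
      Representation.pointwiseStabilizer W.ρ (Representation.fixedBy W.ρ H : Set W) ≠ H)
    (d : ℕ) :
    ∀ (V : Type) [AddCommGroup V] [Module ℂ V] [FiniteDimensional ℂ V]
      (ρ : Representation ℂ G V), finrank ℂ V = d →
      ∑ S : Finset (Fin n), (-1 : ℤ) ^ S.card * (finrank ℂ (ρ.fixedBy (jmap e S)) : ℤ) = 0 := by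
  induction d using Nat.strong_induction_on with
  | _ d ih =>
  intro V _ _ _ ρ hd
  by_cases hd0 : d = 0
  · refine Finset.sum_eq_zero fun S _ => ?_
    have h1 : finrank ℂ (ρ.fixedBy (jmap e S)) ≤ finrank ℂ V := Submodule.finrank_le _
    have h2 : finrank ℂ (ρ.fixedBy (jmap e S)) = 0 := by omega
    rw [h2]
    simp
  by_cases hex : ∃ p : Submodule ℂ V, (∀ g : G, ∀ v ∈ p, ρ g v ∈ p) ∧ p ≠ ⊥ ∧ p ≠ ⊤
  · obtain ⟨p, hpinv, hpbot, hptop⟩ := hex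
    obtain ⟨q, hqinv, hpq⟩ := exists_invariant_isCompl ρ p hpinv
    have hfr : finrank ℂ p + finrank ℂ q = d := by
      rw [← hd]
      exact Submodule.finrank_add_eq_of_isCompl hpq
    have hppos : 0 < finrank ℂ p := by
      rcases Nat.eq_zero_or_pos (finrank ℂ p) with h | h
      · exact absurd (Submodule.finrank_eq_zero.mp h) hpbot
      · exact h
    have hqpos : 0 < finrank ℂ q := by
      rcases Nat.eq_zero_or_pos (finrank ℂ q) with h | h
      · exfalso
        apply hptop
        have hq' : q = ⊥ := Submodule.finrank_eq_zero.mp h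
        have := hpq.sup_eq_top
        rw [hq', sup_bot_eq] at this
        exact this
      · exact h
    have h1 := ih (finrank ℂ p) (by omega) p (subRep ρ p hpinv) rfl
    have h2 := ih (finrank ℂ q) (by omega) q (subRep ρ q hqinv) rfl
    have hsplit : ∀ S : Finset (Fin n),
        (-1 : ℤ) ^ S.card * (finrank ℂ (ρ.fixedBy (jmap e S)) : ℤ)
        = (-1 : ℤ) ^ S.card * (finrank ℂ ((subRep ρ p hpinv).fixedBy (jmap e S)) : ℤ)
          + (-1 : ℤ) ^ S.card * (finrank ℂ ((subRep ρ q hqinv).fixedBy (jmap e S)) : ℤ) := by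
      intro S
      rw [finrank_fixedBy_split ρ p q hpinv hqinv hpq (jmap e S)]
      push_cast
      ring
    rw [Finset.sum_congr rfl (fun S _ => hsplit S), Finset.sum_add_distrib, h1, h2, add_zero]
  · push_neg at hex
    have hirr : ∀ p : Submodule ℂ V, (∀ g : G, ∀ v ∈ p, ρ g v ∈ p) → p = ⊥ ∨ p = ⊤ := by
      intro p hp
      by_cases hb : p = ⊥
      · exact Or.inl hb
      · exact Or.inr (hex p hp hb)
    have hVpos : 0 < finrank ℂ V := by omega
    have hsimp := simple_of_irreducible ρ hVpos hirr
    have hne : ρ.pointwiseStabilizer (ρ.fixedBy H : Set V) ≠ H := hcon (FDRep.of ρ) hsimp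
    set K1 := ρ.pointwiseStabilizer (ρ.fixedBy H : Set V) with hK1
    have hHK1 : H < K1 := lt_of_le_of_ne (le_pointwiseStabilizer ρ H) (Ne.symm hne)
    have hK1mem : K1 ∈ Set.Icc H (⊤ : Subgroup G) := ⟨le_of_lt hHK1, le_top⟩
    set A : Finset (Fin n) := sfin ((e ⟨K1, hK1mem⟩ : Set (Fin n))) with hA
    have hjA : jmap e A = K1 := jmap_sfin e K1 hK1mem
    have hAne : A.Nonempty := by
      rcases A.eq_empty_or_nonempty with h | h
      · exfalso
        apply hne
        rw [← hjA, h, jmap_empty e]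
      · exact h
    have hfix : ∀ S : Finset (Fin n),
        ρ.fixedBy (jmap e (S ∪ A)) = ρ.fixedBy (jmap e S) := by
      intro S
      refine le_antisymm (fixedBy_antitone ρ ((jmap_le_iff e).mpr Finset.subset_union_left)) ?_
      intro v hv
      have hstab : jmap e S ⊔ K1 ≤ ρ.pointwiseStabilizer ({v} : Set V) := by
        refine sup_le ?_ ?_
        · intro g hg x hx
          rw [Set.mem_singleton_iff] at hx
          rw [hx]
          exact hv g hg
        · intro g hg x hx
          rw [Set.mem_singleton_iff] at hx
          rw [hx]
          have hvH : v ∈ ρ.fixedBy H := fixedBy_antitone ρ (jmap_mem e S).1 hv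
          exact hg v hvH
      have hsupmem : jmap e S ⊔ K1 ∈ Set.Icc H (⊤ : Subgroup G) :=
        ⟨le_trans (jmap_mem e S).1 le_sup_left, le_top⟩
      have hjT : jmap e (sfin ((e ⟨jmap e S ⊔ K1, hsupmem⟩ : Set (Fin n)))) = jmap e S ⊔ K1 :=
        jmap_sfin e _ hsupmem
      set T := sfin ((e ⟨jmap e S ⊔ K1, hsupmem⟩ : Set (Fin n))) with hT
      have hST : S ⊆ T := (jmap_le_iff e).mp (by rw [hjT]; exact le_sup_left)
      have hAT : A ⊆ T := (jmap_le_iff e).mp (by rw [hjT, hjA]; exact le_sup_right)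
      have hle : jmap e (S ∪ A) ≤ jmap e T := (jmap_le_iff e).mpr (Finset.union_subset hST hAT)
      intro g hg
      have hg2 : g ∈ ρ.pointwiseStabilizer ({v} : Set V) := by
        refine hstab ?_
        rw [← hjT]
        exact hle hg
      exact hg2 v rfl
    refine sum_cancel (fun S => (finrank ℂ (ρ.fixedBy (jmap e S)) : ℤ)) A hAne ?_
    intro S
    show (finrank ℂ (ρ.fixedBy (jmap e S)) : ℤ) = (finrank ℂ (ρ.fixedBy (jmap e (S ∪ A))) : ℤ)
    rw [hfix S]

end DualOre

/-- Dual version of Ore's theorem: if `[H,G]` is a Boolean interval with nonzero dual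
Euler totient `φ̂(H,G) = ∑_{K ∈ [H,G]} μ(H,K)·|G:K|`, then there is an irreducible complex
representation `V` of `G` whose `H`-fixed subspace has pointwise stabilizer exactly `H`. -/
theorem linearly_primitive_of_boolean_of_dual_euler_totient_ne_zero
    (G : Type) [Group G] [Fintype G] (H : Subgroup G)
    (hBool : ∃ n : ℕ, Nonempty ((Set.Icc H (⊤ : Subgroup G)) ≃o Set (Fin n)))
    (μ : Subgroup G → ℤ) (hμH : μ H = 1)
    (hμ : ∀ K : Subgroup G, H < K → ∑ᶠ L ∈ Set.Icc H K, μ L = 0)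
    (hφ : ∑ᶠ K ∈ Set.Icc H (⊤ : Subgroup G), μ K * (K.index : ℤ) ≠ 0) :
    ∃ W : FDRep ℂ G, CategoryTheory.Simple W ∧
      Representation.pointwiseStabilizer W.ρ
        (Representation.fixedBy W.ρ H : Set W) = H := by
  classical
  by_contra hcon
  push_neg at hcon
  obtain ⟨n, ⟨e⟩⟩ := hBool
  haveI : Finite (Subgroup G) :=
    Finite.of_injective (fun K : Subgroup G => (K : Set G)) SetLike.coe_injective
  haveI : FiniteDimensional ℂ (MonoidAlgebra ℂ G) :=
    Module.Finite.equiv ((MonoidAlgebra.coeffLinearEquiv ℂ).trans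
      (Finsupp.linearEquivFunOnFinite ℂ ℂ G)).symm
  apply hφ
  have hIccfin : (Set.Icc H (⊤ : Subgroup G)).Finite := Set.toFinite _
  rw [← hIccfin.coe_toFinset, finsum_mem_coe_finset]
  have hre : ∑ K ∈ hIccfin.toFinset, μ K * (K.index : ℤ)
      = ∑ S : Finset (Fin n), μ (DualOre.jmap e S) * ((DualOre.jmap e S).index : ℤ) := by
    refine Finset.sum_bij'
      (fun K hK => DualOre.sfin ((e ⟨K, hIccfin.mem_toFinset.mp hK⟩ : Set (Fin n))))
      (fun S _ => DualOre.jmap e S)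
      (fun K hK => Finset.mem_univ _)
      (fun S _ => hIccfin.mem_toFinset.mpr (DualOre.jmap_mem e S))
      (fun K hK => DualOre.jmap_sfin e K _)
      (fun S _ => DualOre.sfin_jmap e S)
      (fun K hK => ?_)
    rw [DualOre.jmap_sfin e K _]
  rw [hre]
  have hμval : ∀ S : Finset (Fin n), μ (DualOre.jmap e S) = (-1 : ℤ) ^ S.card :=
    DualOre.mu_eq e μ hμH hμ
  have hidx : ∀ S : Finset (Fin n), ((DualOre.jmap e S).index : ℤ)
      = (Module.finrank ℂ ((Representation.ofMulAction ℂ G G).fixedBy (DualOre.jmap e S)) : ℤ) := by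
    intro S
    rw [DualOre.finrank_fixedBy_regular]
  calc ∑ S : Finset (Fin n), μ (DualOre.jmap e S) * ((DualOre.jmap e S).index : ℤ)
      = ∑ S : Finset (Fin n), (-1 : ℤ) ^ S.card
          * (Module.finrank ℂ ((Representation.ofMulAction ℂ G G).fixedBy (DualOre.jmap e S)) : ℤ) := by
        refine Finset.sum_congr rfl fun S _ => ?_
        rw [hμval S, hidx S]
    _ = 0 := DualOre.sum_fixedBy_eq_zero H e hcon (Module.finrank ℂ (MonoidAlgebra ℂ G)) (MonoidAlgebra ℂ G)
        (Representation.ofMulAction ℂ G G) rfl
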